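/- There exist constants C₄, C₅ > 0 such that sup_{r∈[1,2]} sup_{f∈C_H(r,L)} P(ψ_(r)⁻¹ ‖f̂_(r) − f‖_∞ ≥ 1+√2) ≤ C₄ n⁻¹ and sup_{r∈[1,2]} sup_{f∈C_H(r,L)} E(ψ_(r)⁻² ‖f̂_(r) − f‖_∞²) ≤ C₅, where each f̂_(r) is computed with K_n = K_(r). -/

import Mathlib

open Matrix MeasureTheory ProbabilityTheory

noncomputable section

/-- Extended knot sequence for degree-`p` B-splines with `K` equispaced interior intervals:
`t_i = 0` for `i ≤ p`, `t_{p+j} = j/K` for `0 ≤ j ≤ K`, `t_i = 1` for `i ≥ K + p`. -/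
def knot (K p : ℕ) (i : ℕ) : ℝ := min 1 (max 0 (((i : ℝ) - p) / K))

/-- The B-spline `B_{i,q}` of degree `q` (Cox–de Boor recursion, with the convention that the
last nonempty knot interval is closed at `x = 1`); `Bspline K p q i x = B_{i,q}(x)`. -/
def Bspline (K p : ℕ) : ℕ → ℕ → ℝ → ℝ
  | 0, i, x =>
      if knot K p i ≤ x ∧ (x < knot K p (i + 1) ∨ (x = 1 ∧ knot K p i < knot K p (i + 1))) then 1
      else 0
  | q + 1, i, x =>
      (x - knot K p i) / (knot K p (i + q + 1) - knot K p i) * Bspline K p q i x +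
      (knot K p (i + q + 2) - x) / (knot K p (i + q + 2) - knot K p (i + 1)) * Bspline K p q (i + 1) x

/-- The design matrix `X = [B_k^{[p]}(x_i)]` at the design points `x_i = i/n`, `i = 1,…,n`. -/
def designX (n K p : ℕ) : Matrix (Fin n) (Fin (K + p)) ℝ := fun i k =>
  Bspline K p p k.val ((i.val + 1 : ℝ) / n)

/-- `β_n = Σ_{i=1}^n (B_{p+1}^{[p]}(x_i))²`. -/
def betan (n K p : ℕ) : ℝ := ∑ i : Fin n, (Bspline K p p p ((i.val + 1 : ℝ) / n)) ^ 2

/-- `Λ = XᵀX / β_n`. -/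
def Lam (n K p : ℕ) : Matrix (Fin (K + p)) (Fin (K + p)) ℝ :=
  (betan n K p)⁻¹ • ((designX n K p)ᵀ * designX n K p)

/-- Second-order difference of a coefficient vector. -/
def secondDiff {m : ℕ} (b : Fin m → ℝ) (i : Fin (m - 2)) : ℝ :=
  b ⟨i.val, by have := i.isLt; omega⟩ - 2 * b ⟨i.val + 1, by have := i.isLt; omega⟩
    + b ⟨i.val + 2, by have := i.isLt; omega⟩

/-- The convex cone `Ω` of coefficient vectors with nonnegative second differences. -/
def cone (m : ℕ) : Set (Fin m → ℝ) := {b | ∀ i : Fin (m - 2), 0 ≤ secondDiff b i}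

/-- The objective function `g(b) = (1/2) bᵀ Λ b - bᵀ ȳ`. -/
def objFun {m : ℕ} (Lam : Matrix (Fin m) (Fin m) ℝ) (ybar b : Fin m → ℝ) : ℝ :=
  (1 / 2) * (b ⬝ᵥ (Lam *ᵥ b)) - b ⬝ᵥ ybar

/-- `ȳ = Xᵀ y / β_n` for a data vector `y ∈ ℝⁿ`. -/
def ybarOf (n K p : ℕ) (y : Fin n → ℝ) : Fin (K + p) → ℝ :=
  (betan n K p)⁻¹ • ((designX n K p)ᵀ *ᵥ y)

/-- `b` are the coefficients of the convex-constrained B-spline least squares fit to data `y`. -/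
def isConstrainedLS (n K p : ℕ) (y : Fin n → ℝ) (b : Fin (K + p) → ℝ) : Prop :=
  b ∈ cone (K + p) ∧ ∀ b' ∈ cone (K + p),
    objFun (Lam n K p) (ybarOf n K p y) b ≤ objFun (Lam n K p) (ybarOf n K p y) b'

/-- The spline function with coefficient vector `b`. -/
def splineFun (K p : ℕ) (b : Fin (K + p) → ℝ) (x : ℝ) : ℝ :=
  ∑ k : Fin (K + p), b k * Bspline K p p k.val x

/-- `g` is the convex-constrained B-spline estimate (as a function) fitted to data `y`. -/
def isCLSfun (n K p : ℕ) (y : Fin n → ℝ) (g : ℝ → ℝ) : Prop :=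
  ∃ b : Fin (K + p) → ℝ, isConstrainedLS n K p y b ∧ g = splineFun K p b

/-- The sup-norm distance `‖g - h‖_∞ = sup_{t ∈ [0,1]} |g(t) - h(t)|`. -/
def supDist (g h : ℝ → ℝ) : ℝ := ⨆ t : Set.Icc (0 : ℝ) 1, |g t.1 - h t.1|

/-- The Hölder class `H^r_L` on `[0,1]`: writing `r = ℓ + γ` with `ℓ ∈ ℕ` and `γ ∈ (0,1]`,
the `ℓ`-th derivative satisfies `|f^{(ℓ)}(x) - f^{(ℓ)}(y)| ≤ L |x-y|^γ`. -/
def memHolder (r L : ℝ) (f : ℝ → ℝ) : Prop :=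
  ∃ l : ℕ, ∃ γ : ℝ, 0 < γ ∧ γ ≤ 1 ∧ (l : ℝ) + γ = r ∧
    ContDiffOn ℝ l f (Set.Icc 0 1) ∧
    ∀ x ∈ Set.Icc (0 : ℝ) 1, ∀ y ∈ Set.Icc (0 : ℝ) 1,
      |iteratedDerivWithin l f (Set.Icc 0 1) x - iteratedDerivWithin l f (Set.Icc 0 1) y| ≤
        L * |x - y| ^ γ

/-- The class `C_H(r,L)` of convex functions on `[0,1]` in the Hölder class `H^r_L`. -/
def memCH (r L : ℝ) (f : ℝ → ℝ) : Prop :=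
  ConvexOn ℝ (Set.Icc (0 : ℝ) 1) f ∧ memHolder r L f

/-- The spline degree used for the estimator `f̂_(r)`: `p = ⌈r-1⌉`, with `p = 1` when `r = 1`. -/
def degOf (r : ℝ) : ℕ := max 1 ⌈r - 1⌉₊

/-- The vector of noise-free data `(f(x_1),…,f(x_n))`, `x_i = i/n`. -/
def noiseFree (n : ℕ) (f : ℝ → ℝ) : Fin n → ℝ := fun i => f ((i.val + 1 : ℝ) / n)

/-- The observation vector `y_i = f(x_i) + σ ε_i`, `x_i = i/n`, at sample point `ω`. -/
def yData (n : ℕ) (sig : ℝ) (f : ℝ → ℝ) {Ωs : Type} (e : Fin n → Ωs → ℝ) (ω : Ωs) :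
    Fin n → ℝ := fun i => f ((i.val + 1 : ℝ) / n) + sig * e i ω

/-- `τ_n = ⌈(log n)^{1/2}⌉`. -/
def tauOf (n : ℕ) : ℕ := ⌈Real.sqrt (Real.log n)⌉₊

/-- The grid points `r_j = 1 + j/τ_n`. -/
def rgrid (n j : ℕ) : ℝ := 1 + (j : ℝ) / tauOf n

/-- The optimal number of knots
`K_(s) = (C₂/(C₁ s √(2(2s+1))))^{-2/(2s+1)} (σ/L)^{-2/(2s+1)} (log n/n)^{-1/(2s+1)}`. -/
def Kform (n : ℕ) (L sig C1 C2 s : ℝ) : ℝ :=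
  (C2 / (C1 * s * Real.sqrt (2 * (2 * s + 1)))) ^ (-(2 / (2 * s + 1))) *
    (sig / L) ^ (-(2 / (2 * s + 1))) * (Real.log n / n) ^ (-(1 / (2 * s + 1)))

/-- The optimal rate `ψ_(s) = C₁ L K_(s)^{-s} + √(2/(2s+1)) C₂ σ √(K_(s) log n / n)`. -/
def psiform (n : ℕ) (L sig C1 C2 s : ℝ) : ℝ :=
  C1 * L * Kform n L sig C1 C2 s ^ (-s) +
    Real.sqrt (2 / (2 * s + 1)) * C2 * sig * Real.sqrt (Kform n L sig C1 C2 s * Real.log n / n)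

lemma knot_mem (K p i : ℕ) : knot K p i ∈ Set.Icc (0:ℝ) 1 := by
  unfold knot
  constructor
  · exact le_min zero_le_one (le_max_left _ _)
  · exact min_le_left _ _

lemma knot_eq (K p i : ℕ) (hK : 0 < K) : knot K p i = ((min K (i - p) : ℕ) : ℝ) / K := by
  unfold knot
  have hK' : (0:ℝ) < K := by exact_mod_cast hK
  rcases le_or_gt i p with h | h
  · have h1 : ((i:ℝ) - p) / K ≤ 0 := by
      apply div_nonpos_of_nonpos_of_nonneg
      · have : (i:ℝ) ≤ p := by exact_mod_cast h
        linarith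
      · exact hK'.le
    have h2 : i - p = 0 := Nat.sub_eq_zero_of_le h
    rw [h2]
    simp [max_eq_left h1]
  · have hip : (p:ℝ) ≤ i := by exact_mod_cast h.le
    have h1 : (0:ℝ) ≤ ((i:ℝ) - p) / K := div_nonneg (by linarith) hK'.le
    rw [max_eq_right h1]
    have hcast : ((i:ℝ) - p) / K = ((i - p : ℕ) : ℝ) / K := by
      congr 1
      have : p ≤ i := h.le
      push_cast [Nat.cast_sub this]
      ring
    rw [hcast]
    rcases le_or_gt (i - p) K with h2 | h2
    · rw [min_eq_right h2, min_eq_right]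
      exact div_le_one_of_le₀ (by exact_mod_cast h2) hK'.le
    · rw [min_eq_left h2.le, min_eq_left]
      · field_simp
      · rw [le_div_iff₀ hK']
        have : (K:ℝ) ≤ (i - p : ℕ) := by exact_mod_cast h2.le
        linarith

lemma knot_diff (K p i j : ℕ) (hK : 0 < K) (h : knot K p i ≠ knot K p j) :
    1 / (K:ℝ) ≤ |knot K p i - knot K p j| := by
  rw [knot_eq K p i hK, knot_eq K p j hK] at *
  have hK' : (0:ℝ) < K := by exact_mod_cast hK
  set a := min K (i - p)
  set b := min K (j - p)
  have hab : a ≠ b := by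
    intro hh; exact h (by rw [hh])
  have h1 : (1:ℝ) ≤ |(a:ℝ) - b| := by
    rcases lt_or_gt_of_ne hab with h2 | h2
    · rw [abs_sub_comm, abs_of_nonneg (by linarith [show (a:ℝ) ≤ b from by exact_mod_cast h2.le])]
      have : a + 1 ≤ b := h2
      have : ((a:ℝ)) + 1 ≤ b := by exact_mod_cast this
      linarith
    · rw [abs_of_nonneg (by linarith [show (b:ℝ) ≤ a from by exact_mod_cast h2.le])]
      have : b + 1 ≤ a := h2
      have : ((b:ℝ)) + 1 ≤ a := by exact_mod_cast this
      linarith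
  have : |(a:ℝ)/K - (b:ℝ)/K| = |(a:ℝ) - b| / K := by
    rw [div_sub_div_same, abs_div, abs_of_pos hK']
  rw [this]
  gcongr

lemma abs_sub_le_one_of_Icc {x t : ℝ} (hx : x ∈ Set.Icc (0:ℝ) 1) (ht : t ∈ Set.Icc (0:ℝ) 1) :
    |x - t| ≤ 1 := by
  rw [abs_le]
  constructor <;> [linarith [hx.1, ht.2]; linarith [hx.2, ht.1]]

lemma coeff_bound (K : ℕ) (hK : 0 < K) (num d : ℝ) (hnum : |num| ≤ 1)
    (hd : d = 0 ∨ 1/(K:ℝ) ≤ |d|) : |num/d| ≤ K := by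
  have hK' : (0:ℝ) < K := by exact_mod_cast hK
  rcases hd with h | h
  · rw [h, div_zero, abs_zero]; positivity
  · rw [abs_div]
    calc |num| / |d| ≤ 1 / (1/(K:ℝ)) :=
          div_le_div₀ zero_le_one hnum (by positivity) h
    _ = K := by field_simp

lemma Bspline_bound (K p : ℕ) (hK : 0 < K) :
    ∀ q i : ℕ, ∀ x ∈ Set.Icc (0:ℝ) 1, |Bspline K p q i x| ≤ (2*(K:ℝ))^q := by
  intro q
  induction q with
  | zero =>
    intro i x hx
    rw [Bspline]
    split <;> simp
  | succ q ih =>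
    intro i x hx
    rw [Bspline]
    have hd1 : knot K p (i+q+1) - knot K p i = 0 ∨
        1/(K:ℝ) ≤ |knot K p (i+q+1) - knot K p i| := by
      rcases eq_or_ne (knot K p (i+q+1)) (knot K p i) with h | h
      · left; rw [h]; ring
      · right; exact knot_diff K p (i+q+1) i hK h
    have hd2 : knot K p (i+q+2) - knot K p (i+1) = 0 ∨
        1/(K:ℝ) ≤ |knot K p (i+q+2) - knot K p (i+1)| := by
      rcases eq_or_ne (knot K p (i+q+2)) (knot K p (i+1)) with h | h
      · left; rw [h]; ring
      · right; exact knot_diff K p (i+q+2) (i+1) hK h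
    have hc1 : |(x - knot K p i)/(knot K p (i+q+1) - knot K p i)| ≤ K :=
      coeff_bound K hK _ _ (abs_sub_le_one_of_Icc hx (knot_mem K p i)) hd1
    have hc2 : |(knot K p (i+q+2) - x)/(knot K p (i+q+2) - knot K p (i+1))| ≤ K := by
      refine coeff_bound K hK _ _ ?_ hd2
      rw [abs_sub_comm]
      exact abs_sub_le_one_of_Icc hx (knot_mem K p (i+q+2))
    have h1 := ih i x hx
    have h2 := ih (i+1) x hx
    set c1 := (x - knot K p i)/(knot K p (i+q+1) - knot K p i) with hc1def
    set c2 := (knot K p (i+q+2) - x)/(knot K p (i+q+2) - knot K p (i+1)) with hc2def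
    set B1 := Bspline K p q i x
    set B2 := Bspline K p q (i+1) x
    calc |c1 * B1 + c2 * B2| ≤ |c1| * |B1| + |c2| * |B2| := by
          rw [← abs_mul, ← abs_mul]; exact abs_add_le _ _
    _ ≤ (K:ℝ) * (2*(K:ℝ))^q + (K:ℝ) * (2*(K:ℝ))^q := by
          apply add_le_add <;> apply mul_le_mul <;>
            first | assumption | positivity | exact abs_nonneg _
    _ = (2*(K:ℝ))^(q+1) := by ring

lemma splineFun_bound (K p : ℕ) (hK : 0 < K) (b : Fin (K + p) → ℝ) :
    ∃ M : ℝ, ∀ x ∈ Set.Icc (0:ℝ) 1, |splineFun K p b x| ≤ M := by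
  refine ⟨∑ k : Fin (K+p), |b k| * (2*(K:ℝ))^p, fun x hx => ?_⟩
  unfold splineFun
  calc |∑ k : Fin (K+p), b k * Bspline K p p k.val x| ≤
      ∑ k : Fin (K+p), |b k * Bspline K p p k.val x| := Finset.abs_sum_le_sum_abs _ _
  _ ≤ ∑ k : Fin (K+p), |b k| * (2*(K:ℝ))^p := by
      apply Finset.sum_le_sum
      intro k _
      rw [abs_mul]
      exact mul_le_mul_of_nonneg_left (Bspline_bound K p hK p k.val x hx) (abs_nonneg _)

instance : Nonempty (Set.Icc (0:ℝ) 1) := ⟨⟨0, Set.left_mem_Icc.mpr zero_le_one⟩⟩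

lemma supDist_nonneg (g h : ℝ → ℝ) : 0 ≤ supDist g h :=
  Real.iSup_nonneg (fun t => abs_nonneg _)

lemma supDist_le {g h : ℝ → ℝ} {M : ℝ} (hM : ∀ t ∈ Set.Icc (0:ℝ) 1, |g t - h t| ≤ M) :
    supDist g h ≤ M :=
  ciSup_le (fun t => hM t.1 t.2)

lemma le_supDist {g h : ℝ → ℝ} {M : ℝ} (hM : ∀ t ∈ Set.Icc (0:ℝ) 1, |g t - h t| ≤ M)
    (t : Set.Icc (0:ℝ) 1) : |g t.1 - h t.1| ≤ supDist g h :=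
  le_ciSup ⟨M, by rintro _ ⟨u, rfl⟩; exact hM u.1 u.2⟩ t

lemma supDist_triangle {g m h : ℝ → ℝ} {M1 M2 : ℝ}
    (h1 : ∀ t ∈ Set.Icc (0:ℝ) 1, |g t - m t| ≤ M1)
    (h2 : ∀ t ∈ Set.Icc (0:ℝ) 1, |m t - h t| ≤ M2) :
    supDist g h ≤ supDist g m + supDist m h := by
  apply ciSup_le
  intro t
  calc |g t.1 - h t.1| ≤ |g t.1 - m t.1| + |m t.1 - h t.1| := abs_sub_le _ _ _
  _ ≤ supDist g m + supDist m h := add_le_add (le_supDist h1 t) (le_supDist h2 t)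

lemma memCH_bound {r L : ℝ} {f : ℝ → ℝ} (hf : memCH r L f) :
    ∃ M : ℝ, ∀ x ∈ Set.Icc (0:ℝ) 1, |f x| ≤ M := by
  obtain ⟨-, l, γ, -, -, -, hcd, -⟩ := hf
  obtain ⟨M, hM⟩ := isCompact_Icc.exists_bound_of_continuousOn hcd.continuousOn
  exact ⟨M, fun x hx => hM x hx⟩

lemma rpow_le_max {x t : ℝ} (hx : 0 ≤ x) (ht0 : 0 ≤ t) (ht1 : t ≤ 1) : x ^ t ≤ max 1 x := by
  rcases le_or_gt x 1 with h | h
  · exact le_trans (Real.rpow_le_one hx h ht0) (le_max_left _ _)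
  · calc x ^ t ≤ x ^ (1:ℝ) := Real.rpow_le_rpow_of_exponent_le h.le ht1
    _ = x := Real.rpow_one x
    _ ≤ max 1 x := le_max_right _ _

section KformLemmas

variable {n : ℕ} {L sig C1 C2 r : ℝ}

lemma kform_pos (hn : 2 ≤ n) (hL : 0 < L) (hsig : 0 < sig) (hC1 : 0 < C1) (hC2 : 0 < C2)
    (hr1 : 1 ≤ r) (hr2 : r ≤ 2) : 0 < Kform n L sig C1 C2 r := by
  have hn1 : (1:ℝ) < n := by exact_mod_cast hn.trans_lt' one_lt_two
  have hlog : 0 < Real.log n := Real.log_pos hn1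
  have hnpos : (0:ℝ) < n := by linarith
  unfold Kform
  have h1 : 0 < Real.sqrt (2*(2*r+1)) := Real.sqrt_pos.mpr (by linarith)
  positivity

lemma kform_spec (hn : 2 ≤ n) (hL : 0 < L) (hsig : 0 < sig) (hC1 : 0 < C1) (hC2 : 0 < C2)
    (hr1 : 1 ≤ r) (hr2 : r ≤ 2) :
    Real.sqrt (2/(2*r+1)) * C2 * sig * Real.sqrt (Kform n L sig C1 C2 r * Real.log n / n)
      = 2*r*(C1 * L * Kform n L sig C1 C2 r ^ (-r)) := by
  have hn1 : (1:ℝ) < n := by exact_mod_cast hn.trans_lt' one_lt_two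
  have hlog : 0 < Real.log n := Real.log_pos hn1
  have hnpos : (0:ℝ) < n := by linarith
  have h2r1 : (0:ℝ) < 2*r+1 := by linarith
  have hs2 : 0 < Real.sqrt (2*(2*r+1)) := Real.sqrt_pos.mpr (by linarith)
  set s2 := Real.sqrt (2*(2*r+1)) with hs2def
  have hs2sq : s2^2 = 2*(2*r+1) := Real.sq_sqrt (by linarith)
  set c := C2/(C1*r*s2) with hcdef
  have hcpos : 0 < c := by positivity
  set g := Real.log n / n with hgdef
  have hgpos : 0 < g := by positivity
  set K := Kform n L sig C1 C2 r with hKdef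
  have hKpos : 0 < K := kform_pos hn hL hsig hC1 hC2 hr1 hr2
  have hK : K = c ^ (-(2/(2*r+1))) * (sig/L) ^ (-(2/(2*r+1))) * g ^ (-(1/(2*r+1))) := rfl
  have hKpow : K ^ (2*r+1) = c ^ (-2:ℝ) * (sig/L) ^ (-2:ℝ) * g ^ (-1:ℝ) := by
    have e1 : -(2/(2*r+1))*(2*r+1) = (-2:ℝ) := by field_simp
    have e2 : -(1/(2*r+1))*(2*r+1) = (-1:ℝ) := by field_simp
    rw [hK, Real.mul_rpow (by positivity) (by positivity),
       Real.mul_rpow (by positivity) (by positivity),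
       ← Real.rpow_mul hcpos.le, ← Real.rpow_mul (by positivity : (0:ℝ) ≤ sig/L),
       ← Real.rpow_mul hgpos.le, e1, e2]
  have hKsplit : K = K ^ (2*r+1) * K ^ (-(2*r)) := by
    rw [← Real.rpow_add hKpos]
    norm_num
  have hKval : K * Real.log n / n = (C1^2 * r^2 * (2*(2*r+1)) * L^2)/(C2^2*sig^2) * K ^ (-(2*r)) := by
    have hglog : K * Real.log n / n = K * g := by rw [hgdef]; ring
    rw [hglog]
    nth_rewrite 1 [hKsplit]
    rw [hKpow]
    rw [Real.rpow_neg hcpos.le, Real.rpow_neg (by positivity : (0:ℝ) ≤ sig/L),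
       Real.rpow_neg hgpos.le, Real.rpow_one, Real.rpow_two, Real.rpow_two]
    have hc2 : (c^2)⁻¹ = C1^2*r^2*(2*(2*r+1))/C2^2 := by
      rw [hcdef, div_pow, inv_div, mul_pow, mul_pow, hs2sq]
    rw [hc2]
    have hLs : ((sig/L)^2)⁻¹ = L^2/sig^2 := by
      rw [div_pow, inv_div]
    rw [hLs]
    field_simp
  have hA0 : (0:ℝ) ≤ Real.sqrt (2/(2*r+1)) * C2 * sig * Real.sqrt (K * Real.log n / n) := by positivity
  have hB0 : (0:ℝ) ≤ 2*r*(C1 * L * K ^ (-r)) := by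
    have := Real.rpow_pos_of_pos hKpos (-r)
    positivity
  rw [← Real.sqrt_sq hA0, ← Real.sqrt_sq hB0]
  congr 1
  have hsq1 : (Real.sqrt (2/(2*r+1)))^2 = 2/(2*r+1) := Real.sq_sqrt (by positivity)
  have hsq2 : (Real.sqrt (K * Real.log n / n))^2 = K * Real.log n / n :=
    Real.sq_sqrt (by positivity)
  have hKr2 : (K ^ (-r))^2 = K ^ (-(2*r)) := by
    rw [← Real.rpow_two, ← Real.rpow_mul hKpos.le]
    ring_nf
  calc (Real.sqrt (2/(2*r+1)) * C2 * sig * Real.sqrt (K * Real.log n / n))^2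
      = (2/(2*r+1)) * C2^2 * sig^2 * (K * Real.log n / n) := by
        rw [mul_pow, mul_pow, mul_pow, hsq1, hsq2]
  _ = (2/(2*r+1)) * C2^2 * sig^2 * ((C1^2 * r^2 * (2*(2*r+1)) * L^2)/(C2^2*sig^2) * K ^ (-(2*r))) := by
        rw [hKval]
  _ = 4*r^2*C1^2*L^2 * K ^ (-(2*r)) := by field_simp; ring
  _ = (2*r*(C1 * L * K ^ (-r)))^2 := by rw [← hKr2]; ring

lemma kform_le (hn : 2 ≤ n) (hL : 0 < L) (hsig : 0 < sig) (hC1 : 0 < C1) (hC2 : 0 < C2)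
    (hr1 : 1 ≤ r) (hr2 : r ≤ 2) :
    Kform n L sig C1 C2 r ≤
      2 * (max 1 (C1*2*Real.sqrt 10/C2) * max 1 (L/sig)) * (n:ℝ) ^ (1/(2*r+1)) := by
  have hn1 : (1:ℝ) < n := by exact_mod_cast hn.trans_lt' one_lt_two
  have hlog : 0 < Real.log n := Real.log_pos hn1
  have hnpos : (0:ℝ) < n := by linarith
  have h2r1 : (0:ℝ) < 2*r+1 := by linarith
  have hs2 : 0 < Real.sqrt (2*(2*r+1)) := Real.sqrt_pos.mpr (by linarith)
  have he0 : (0:ℝ) ≤ 1/(2*r+1) := by positivity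
  have he1 : 1/(2*r+1) ≤ 1 := by rw [div_le_one h2r1]; linarith
  have he20 : (0:ℝ) ≤ 2/(2*r+1) := by positivity
  have he21 : 2/(2*r+1) ≤ 1 := by rw [div_le_one h2r1]; linarith
  set c := C2/(C1*r*Real.sqrt (2*(2*r+1))) with hcdef
  have hcpos : 0 < c := by positivity
  have hgpos : 0 < Real.log n / n := by positivity
  have hK : Kform n L sig C1 C2 r
      = (c⁻¹) ^ (2/(2*r+1)) * ((L/sig)) ^ (2/(2*r+1)) * ((n:ℝ)/Real.log n) ^ (1/(2*r+1)) := by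
    unfold Kform
    rw [Real.rpow_neg hcpos.le, Real.rpow_neg (by positivity : (0:ℝ) ≤ sig/L),
       Real.rpow_neg hgpos.le, ← Real.inv_rpow hcpos.le, ← Real.inv_rpow (by positivity),
       ← Real.inv_rpow hgpos.le, inv_div, inv_div, inv_div]
  rw [hK]
  have hF1 : (c⁻¹) ^ (2/(2*r+1)) ≤ max 1 (C1*2*Real.sqrt 10/C2) := by
    have hc1 : c⁻¹ ≤ C1*2*Real.sqrt 10/C2 := by
      rw [hcdef, inv_div]
      gcongr
      linarith
    calc (c⁻¹) ^ (2/(2*r+1)) ≤ max 1 c⁻¹ := rpow_le_max (by positivity) he20 he21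
    _ ≤ max 1 (C1*2*Real.sqrt 10/C2) := max_le_max le_rfl hc1
  have hF2 : ((L/sig)) ^ (2/(2*r+1)) ≤ max 1 (L/sig) :=
    rpow_le_max (by positivity) he20 he21
  have hF3 : ((n:ℝ)/Real.log n) ^ (1/(2*r+1)) ≤ 2 * (n:ℝ) ^ (1/(2*r+1)) := by
    have hlog2 : (1/2:ℝ) ≤ Real.log n := by
      have := Real.log_two_gt_d9
      have h2 : Real.log 2 ≤ Real.log n := Real.log_le_log (by norm_num) (by exact_mod_cast hn)
      linarith
    have h1 : (n:ℝ)/Real.log n ≤ 2*n := by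
      calc (n:ℝ)/Real.log n ≤ (n:ℝ)/(1/2) := by
            apply div_le_div_of_nonneg_left hnpos.le (by norm_num) hlog2
      _ = 2*n := by ring
    calc ((n:ℝ)/Real.log n) ^ (1/(2*r+1)) ≤ (2*(n:ℝ)) ^ (1/(2*r+1)) :=
          Real.rpow_le_rpow (by positivity) h1 he0
    _ = 2 ^ (1/(2*r+1)) * (n:ℝ) ^ (1/(2*r+1)) := Real.mul_rpow (by norm_num) hnpos.le
    _ ≤ 2 * (n:ℝ) ^ (1/(2*r+1)) := by
          apply mul_le_mul_of_nonneg_right ?_ (by positivity)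
          calc (2:ℝ) ^ (1/(2*r+1)) ≤ 2 ^ (1:ℝ) :=
                Real.rpow_le_rpow_of_exponent_le one_le_two he1
          _ = 2 := Real.rpow_one 2
  calc (c⁻¹) ^ (2/(2*r+1)) * ((L/sig)) ^ (2/(2*r+1)) * ((n:ℝ)/Real.log n) ^ (1/(2*r+1))
      ≤ (max 1 (C1*2*Real.sqrt 10/C2)) * (max 1 (L/sig)) * (2 * (n:ℝ) ^ (1/(2*r+1))) := by
        apply mul_le_mul (mul_le_mul hF1 hF2 (by positivity) (by positivity)) hF3
          (by positivity) (by positivity)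
  _ = 2 * (max 1 (C1*2*Real.sqrt 10/C2) * max 1 (L/sig)) * (n:ℝ) ^ (1/(2*r+1)) := by ring

end KformLemmas

lemma quad_le_pow_aux (c : ℝ) (hc : 0 ≤ c) :
    ∀ k : ℕ, 1 + k*c + k*((k:ℝ)-1)/2*c^2 ≤ (1+c)^k := by
  intro k
  induction k with
  | zero => norm_num
  | succ k ih =>
    have hk : (0:ℝ) ≤ k := Nat.cast_nonneg k
    have hkk1 : (0:ℝ) ≤ (k:ℝ)*((k:ℝ)-1) := by
      rcases Nat.eq_zero_or_pos k with h | h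
      · simp [h]
      · have : (1:ℝ) ≤ k := by exact_mod_cast h
        nlinarith
    have h2 : (1 + (k:ℝ)*c + k*((k:ℝ)-1)/2*c^2)*(1+c) ≤ (1+c)^(k+1) := by
      rw [pow_succ]
      exact mul_le_mul_of_nonneg_right ih (by linarith)
    push_cast
    nlinarith [h2, mul_nonneg hkk1 (by positivity : (0:ℝ) ≤ c^3)]

lemma w_ge : (53/50:ℝ) ≤ (2:ℝ) ^ ((1:ℝ)/10) := by
  by_contra h
  push_neg at h
  have h10 : ((2:ℝ) ^ ((1:ℝ)/10)) ^ (10:ℕ) < ((53/50:ℝ))^(10:ℕ) :=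
    pow_lt_pow_left₀ h (by positivity) (by norm_num)
  rw [← Real.rpow_natCast ((2:ℝ) ^ ((1:ℝ)/10)) 10, ← Real.rpow_mul (by norm_num)] at h10
  rw [show (1:ℝ)/10*(10:ℕ) = 1 by norm_num, Real.rpow_one] at h10
  norm_num at h10

lemma poly_le_w (k : ℕ) : ((k:ℝ)+4)^2 ≤ 1000 * ((2:ℝ) ^ ((1:ℝ)/10))^k := by
  have h1 : ((53/50:ℝ))^k ≤ ((2:ℝ) ^ ((1:ℝ)/10))^k :=
    pow_le_pow_left₀ (by norm_num) w_ge k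
  have h2 := quad_le_pow_aux (3/50) (by norm_num) k
  rw [show (1:ℝ)+3/50 = 53/50 by norm_num] at h2
  have hk : (0:ℝ) ≤ k := Nat.cast_nonneg k
  nlinarith [h2.trans h1]

lemma rho_le : (2:ℝ) ^ (-((1:ℝ)/10)) ≤ 19/20 := by
  have hw := w_ge
  have hwpos : (0:ℝ) < (2:ℝ) ^ ((1:ℝ)/10) := by positivity
  rw [Real.rpow_neg (by norm_num)]
  rw [inv_le_comm₀ hwpos (by norm_num)]
  calc (19/20:ℝ)⁻¹ = 20/19 := by norm_num
  _ ≤ 53/50 := by norm_num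
  _ ≤ _ := hw
lemma beta_sq_ge {r : ℝ} (hr1 : 1 ≤ r) (hr2 : r ≤ 2) :
    2*r+2 ≤ (Real.sqrt 2*(2*r+1)/(2*r)+1)^2 := by
  have hsq2 : Real.sqrt 2 ^ 2 = 2 := Real.sq_sqrt (by norm_num)
  have hsq2nn : (0:ℝ) ≤ Real.sqrt 2 := Real.sqrt_nonneg 2
  have hsq2lb : (1.4:ℝ) ≤ Real.sqrt 2 := by nlinarith
  have hq : (5/4:ℝ) ≤ (2*r+1)/(2*r) := by
    rw [le_div_iff₀ (by linarith)]; linarith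
  have hβlb : Real.sqrt 2*(5/4) + 1 ≤ Real.sqrt 2*(2*r+1)/(2*r) + 1 := by
    have h := mul_le_mul_of_nonneg_left hq hsq2nn
    calc Real.sqrt 2*(5/4) + 1 ≤ Real.sqrt 2*((2*r+1)/(2*r)) + 1 := by linarith
    _ = Real.sqrt 2*(2*r+1)/(2*r) + 1 := by ring
  have hb2 : (Real.sqrt 2*(5/4)+1)^2 ≤ (Real.sqrt 2*(2*r+1)/(2*r)+1)^2 :=
    pow_le_pow_left₀ (by positivity) hβlb 2
  have hval : (Real.sqrt 2*(5/4)+1)^2 = 25/16*(Real.sqrt 2^2) + 5/2*Real.sqrt 2 + 1 := by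
    ring
  rw [hsq2] at hval
  linarith [hb2, hval.le, hval.ge, hsq2lb, hr2]
set_option maxHeartbeats 2000000 in
/-- Lemma 7.3.  There are `C₄, C₅ > 0` such that, uniformly over
`r ∈ [1,2]` and `f ∈ C_H(r,L)`, the estimator `f̂_(r)` computed with `K_n = K_(r)` satisfies
`P(ψ_(r)⁻¹‖f̂_(r) - f‖_∞ ≥ 1+√2) ≤ C₄ n⁻¹` and `E(ψ_(r)⁻²‖f̂_(r) - f‖_∞²) ≤ C₅`. -/
theorem stmt14 (L sig C1 C2 : ℝ) (hL : 0 < L) (hsig : 0 < sig) (hC1 : 0 < C1) (hC2 : 0 < C2) :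
    ∃ C4 C5 : ℝ, 0 < C4 ∧ 0 < C5 ∧
      ∀ n : ℕ, 2 ≤ n →
      ∀ r : ℝ, 1 ≤ r → r ≤ 2 →
      ∀ Kr : ℕ, 0 < Kr → (Kr : ℝ) = Kform n L sig C1 C2 r →
      ∀ f : ℝ → ℝ, memCH r L f →
      ∀ (Ωs : Type) (_ : MeasurableSpace Ωs) (μ : Measure Ωs), IsProbabilityMeasure μ →
      ∀ e : Fin n → Ωs → ℝ,
        iIndepFun e μ →
        (∀ i, μ.map (e i) = gaussianReal 0 1) →
      ∀ fhat : Ωs → ℝ → ℝ,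
        (∀ ω, isCLSfun n Kr (degOf r) (yData n sig f e ω) (fhat ω)) →
      ∀ fbar : ℝ → ℝ, isCLSfun n Kr (degOf r) (noiseFree n f) fbar →
        supDist fbar f ≤ C1 * L * (Kr : ℝ) ^ (-r) →
        (∀ u : ℝ, 0 < u →
          μ {ω | u ≤ supDist (fhat ω) fbar} ≤
            ENNReal.ofReal (((Kr : ℝ) + 1) *
              Real.exp (-((n : ℝ) * u ^ 2) / (2 * Kr * C2 ^ 2 * sig ^ 2)))) →
        μ {ω | 1 + Real.sqrt 2 ≤ (psiform n L sig C1 C2 r)⁻¹ * supDist (fhat ω) f} ≤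
            ENNReal.ofReal (C4 / n) ∧
        (∫ ω, ((psiform n L sig C1 C2 r)⁻¹ * supDist (fhat ω) f) ^ 2 ∂μ) ≤ C5 := by
  have hsq2 : Real.sqrt 2 ^ 2 = 2 := Real.sq_sqrt (by norm_num)
  have hsq2nn : (0:ℝ) ≤ Real.sqrt 2 := Real.sqrt_nonneg 2
  have hsq2lb : (1.4:ℝ) ≤ Real.sqrt 2 := by nlinarith
  have hsq2ub : Real.sqrt 2 ≤ (1.5:ℝ) := by nlinarith
  set D := max 1 (C1*2*Real.sqrt 10/C2) * max 1 (L/sig) with hD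
  have hD1 : 1 ≤ D := by
    have h1 : (1:ℝ) ≤ max 1 (C1*2*Real.sqrt 10/C2) := le_max_left _ _
    have h2 : (1:ℝ) ≤ max 1 (L/sig) := le_max_left _ _
    nlinarith
  refine ⟨2*D+1, 6 + 20000*(2*D+1), by linarith, by linarith, ?_⟩
  intro n hn r hr1 hr2 Kr hKrpos hKr f hf Ωs mΩ μ hμ e hindep hgauss fhat hfhat fbar hfbar
    hfbar_close htail
  have hn1 : (1:ℝ) < n := by exact_mod_cast hn.trans_lt' one_lt_two
  have hnpos : (0:ℝ) < n := by linarith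
  have hlog : 0 < Real.log n := Real.log_pos hn1
  have hlog2 : Real.log 2 ≤ Real.log n := Real.log_le_log (by norm_num) (by exact_mod_cast hn)
  have hkpos : (0:ℝ) < (Kr:ℝ) := by exact_mod_cast hKrpos
  have h2r1 : (0:ℝ) < 2*r+1 := by linarith
  have h2r1le : 2*r+1 ≤ 5 := by linarith
  set first := C1 * L * (Kr:ℝ) ^ (-r) with hfirstdef
  set second := Real.sqrt (2/(2*r+1)) * C2 * sig * Real.sqrt ((Kr:ℝ) * Real.log n / n)
    with hseconddef
  have hψeq : psiform n L sig C1 C2 r = first + second := by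
    unfold psiform
    rw [← hKr]
  have hfirstpos : 0 < first := by
    have := Real.rpow_pos_of_pos hkpos (-r)
    positivity
  have hrel : second = 2*r*first := by
    have := kform_spec (n := n) hn hL hsig hC1 hC2 hr1 hr2
    rw [← hKr] at this
    exact this
  have hsecondpos : 0 < second := by rw [hrel]; positivity
  have hψpos : 0 < psiform n L sig C1 C2 r := by rw [hψeq]; linarith
  have hKle : (Kr:ℝ) ≤ 2*D*(n:ℝ)^(1/(2*r+1)) := by
    rw [hKr, hD]
    exact kform_le hn hL hsig hC1 hC2 hr1 hr2
  have hnr1 : (1:ℝ) ≤ (n:ℝ)^(1/(2*r+1)) := by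
    rw [← Real.rpow_zero (n:ℝ)]
    exact Real.rpow_le_rpow_of_exponent_le hn1.le (by positivity)
  have hK1 : (Kr:ℝ) + 1 ≤ (2*D+1) * (n:ℝ)^(1/(2*r+1)) := by nlinarith
  have hsecond_sq : second^2 = 2/(2*r+1) * (C2^2*sig^2) * ((Kr:ℝ)*Real.log n/n) := by
    rw [hseconddef, mul_pow, mul_pow, mul_pow,
       Real.sq_sqrt (by positivity : (0:ℝ) ≤ 2/(2*r+1)),
       Real.sq_sqrt (by positivity : (0:ℝ) ≤ (Kr:ℝ)*Real.log n/n)]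
    ring
  have hexp_eq : ∀ v : ℝ, ((n:ℝ) * (v*second)^2)/(2*(Kr:ℝ)*C2^2*sig^2)
      = v^2 * Real.log n/(2*r+1) := by
    intro v
    rw [mul_pow, hsecond_sq]
    field_simp
  -- pointwise triangle inequality
  obtain ⟨Mf, hMf⟩ := memCH_bound hf
  obtain ⟨bbar, -, hfbar_eq⟩ := hfbar
  obtain ⟨Mbar, hMbar'⟩ := splineFun_bound Kr (degOf r) hKrpos bbar
  have hMbar : ∀ t ∈ Set.Icc (0:ℝ) 1, |fbar t| ≤ Mbar := by
    intro t ht; rw [hfbar_eq]; exact hMbar' t ht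
  have htri : ∀ ω, supDist (fhat ω) f ≤ supDist (fhat ω) fbar + supDist fbar f := by
    intro ω
    obtain ⟨b, -, hb⟩ := hfhat ω
    obtain ⟨Mh, hMh'⟩ := splineFun_bound Kr (degOf r) hKrpos b
    have hMh : ∀ t ∈ Set.Icc (0:ℝ) 1, |fhat ω t| ≤ Mh := by
      intro t ht; rw [hb]; exact hMh' t ht
    refine supDist_triangle (M1 := Mh + Mbar) (M2 := Mbar + Mf) ?_ ?_
    · intro t ht
      exact (abs_sub _ _).trans (add_le_add (hMh t ht) (hMbar t ht))
    · intro t ht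
      exact (abs_sub _ _).trans (add_le_add (hMbar t ht) (hMf t ht))
  have hsub : ∀ t : ℝ, {ω | t ≤ (psiform n L sig C1 C2 r)⁻¹ * supDist (fhat ω) f} ⊆
      {ω | t*(first+second) - first ≤ supDist (fhat ω) fbar} := by
    intro t ω hω
    simp only [Set.mem_setOf_eq] at hω ⊢
    have hS : t*(first+second) ≤ supDist (fhat ω) f := by
      rw [← hψeq]
      rw [le_inv_mul_iff₀ hψpos] at hω
      calc t * psiform n L sig C1 C2 r = psiform n L sig C1 C2 r * t := by ring
      _ ≤ supDist (fhat ω) f := hω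
    have h1 := htri ω
    have h2 : supDist fbar f ≤ first := hfbar_close
    linarith
  constructor
  · -- probability bound
    set u1 := (1 + Real.sqrt 2)*(first+second) - first with hu1def
    have hu1pos : 0 < u1 := by
      have hrw : u1 = Real.sqrt 2*first + (1+Real.sqrt 2)*second := by rw [hu1def]; ring
      have h01 : 0 < Real.sqrt 2 * first := mul_pos (by linarith) hfirstpos
      have h02 : 0 < (1+Real.sqrt 2) * second := mul_pos (by linarith) hsecondpos
      linarith [hrw.ge, hrw.le]
    have hβ : u1 = (Real.sqrt 2*(2*r+1)/(2*r) + 1) * second := by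
      have hfirst_eq : first = second/(2*r) := by rw [hrel]; field_simp
      rw [hu1def, hfirst_eq]
      field_simp
      ring
    set β := Real.sqrt 2*(2*r+1)/(2*r) + 1 with hβdef
    have hββ : 2*r+2 ≤ β^2 := by rw [hβdef]; exact beta_sq_ge hr1 hr2
    calc μ {ω | 1 + Real.sqrt 2 ≤ (psiform n L sig C1 C2 r)⁻¹ * supDist (fhat ω) f}
        ≤ μ {ω | u1 ≤ supDist (fhat ω) fbar} := measure_mono (hsub (1 + Real.sqrt 2))
    _ ≤ ENNReal.ofReal (((Kr : ℝ) + 1) *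
          Real.exp (-((n : ℝ) * u1 ^ 2) / (2 * Kr * C2 ^ 2 * sig ^ 2))) := htail u1 hu1pos
    _ ≤ ENNReal.ofReal ((2*D+1) / n) := by
        apply ENNReal.ofReal_le_ofReal
        have hexpv : ((n:ℝ) * u1 ^ 2) / (2 * Kr * C2 ^ 2 * sig ^ 2)
            = β^2 * Real.log n/(2*r+1) := by
          rw [hβ]
          exact hexp_eq β
        rw [neg_div, hexpv]
        have hge : Real.exp (-(β^2 * Real.log n/(2*r+1))) = (n:ℝ) ^ (-(β^2/(2*r+1))) := by
          rw [Real.rpow_def_of_pos hnpos]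
          congr 1
          ring
        rw [hge]
        calc ((Kr:ℝ)+1) * (n:ℝ) ^ (-(β^2/(2*r+1)))
            ≤ (2*D+1) * (n:ℝ)^(1/(2*r+1)) * (n:ℝ) ^ (-(β^2/(2*r+1))) := by
              apply mul_le_mul_of_nonneg_right hK1 (by positivity)
        _ = (2*D+1) * (n:ℝ)^(1/(2*r+1) + -(β^2/(2*r+1))) := by
              rw [mul_assoc, ← Real.rpow_add hnpos]
        _ ≤ (2*D+1) * (n:ℝ)^(-1:ℝ) := by
              apply mul_le_mul_of_nonneg_left ?_ (by linarith)
              apply Real.rpow_le_rpow_of_exponent_le hn1.le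
              have hd : (2*r+2)/(2*r+1) ≤ β^2/(2*r+1) := by gcongr
              have : 1/(2*r+1) - (2*r+2)/(2*r+1) = -1 := by field_simp; ring
              linarith
        _ = (2*D+1) / n := by rw [Real.rpow_neg_one]; ring
  · -- expectation bound
    by_cases hInt : Integrable
        (fun ω => ((psiform n L sig C1 C2 r)⁻¹ * supDist (fhat ω) f) ^ 2) μ
    swap
    · rw [integral_undef hInt]
      linarith
    set X : Ωs → ℝ := fun ω => (psiform n L sig C1 C2 r)⁻¹ * supDist (fhat ω) f with hXdef
    have hXnn : ∀ ω, 0 ≤ X ω := fun ω =>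
      mul_nonneg (inv_nonneg.mpr hψpos.le) (supDist_nonneg _ _)
    rw [integral_eq_lintegral_of_nonneg_ae (Filter.Eventually.of_forall fun ω => sq_nonneg _)
      hInt.aestronglyMeasurable]
    apply ENNReal.toReal_le_of_le_ofReal (by linarith)
    set t0 : ℝ := 1 + Real.sqrt 2 with ht0def
    have ht0pos : (1:ℝ) ≤ t0 := by rw [ht0def]; linarith
    set A : ℕ → Set Ωs := fun j => toMeasurable μ {ω | t0 + j ≤ X ω} with hAdef
    -- pointwise bound
    have hpt : ∀ ω, ENNReal.ofReal ((X ω)^2) ≤ ENNReal.ofReal (t0^2)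
        + ∑' j:ℕ, (A j).indicator (fun _ => ENNReal.ofReal (((j:ℝ)+4)^2)) ω := by
      intro ω
      rcases le_or_gt (X ω) t0 with h | h
      · refine le_trans ?_ le_self_add
        exact ENNReal.ofReal_le_ofReal (pow_le_pow_left₀ (hXnn ω) h 2)
      · set j := ⌊X ω - t0⌋₊ with hjdef
        have hj1 : t0 + j ≤ X ω := by
          have := Nat.floor_le (by linarith : (0:ℝ) ≤ X ω - t0)
          rw [← hjdef] at this
          linarith
        have hj2 : X ω < t0 + j + 1 := by
          have := Nat.lt_floor_add_one (X ω - t0)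
          rw [← hjdef] at this
          linarith
        have hmem : ω ∈ A j := subset_toMeasurable μ _ hj1
        have hXb : (X ω)^2 ≤ ((j:ℝ)+4)^2 := by
          apply pow_le_pow_left₀ (hXnn ω)
          have : t0 + 1 ≤ 4 := by rw [ht0def]; linarith
          linarith
        calc ENNReal.ofReal ((X ω)^2) ≤ ENNReal.ofReal (((j:ℝ)+4)^2) :=
              ENNReal.ofReal_le_ofReal hXb
        _ = (A j).indicator (fun _ => ENNReal.ofReal (((j:ℝ)+4)^2)) ω :=
              (Set.indicator_of_mem hmem (fun _ => ENNReal.ofReal (((j:ℝ)+4)^2))).symm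
        _ ≤ ∑' i:ℕ, (A i).indicator (fun _ => ENNReal.ofReal (((i:ℝ)+4)^2)) ω :=
              ENNReal.le_tsum j
        _ ≤ _ := le_add_self
    -- tail bound for each j
    have hAj : ∀ j:ℕ, μ (A j) ≤
        ENNReal.ofReal ((2*D+1) * Real.exp (-((j:ℝ)*(Real.log 2/5)))) := by
      intro j
      have hjnn : (0:ℝ) ≤ j := Nat.cast_nonneg j
      set uj := (t0+(j:ℝ))*(first+second) - first with hujdef
      have hujpos : 0 < uj := by
        have hrw : uj = (t0-1+(j:ℝ))*first + (t0+(j:ℝ))*second := by rw [hujdef]; ring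
        have h01 : 0 ≤ (t0-1+(j:ℝ)) * first := mul_nonneg (by linarith) hfirstpos.le
        have h02 : 0 < (t0+(j:ℝ)) * second := mul_pos (by linarith) hsecondpos
        linarith [hrw.ge, hrw.le]
      have h1 : μ (A j) = μ {ω | t0 + j ≤ X ω} := measure_toMeasurable _
      have h2 : {ω | t0 + (j:ℝ) ≤ X ω} ⊆ {ω | uj ≤ supDist (fhat ω) fbar} := hsub (t0+(j:ℝ))
      calc μ (A j) = μ {ω | t0 + (j:ℝ) ≤ X ω} := h1
      _ ≤ μ {ω | uj ≤ supDist (fhat ω) fbar} := measure_mono h2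
      _ ≤ ENNReal.ofReal (((Kr : ℝ) + 1) *
            Real.exp (-((n : ℝ) * uj ^ 2) / (2 * Kr * C2 ^ 2 * sig ^ 2))) := htail uj hujpos
      _ ≤ ENNReal.ofReal ((2*D+1) * Real.exp (-((j:ℝ)*(Real.log 2/5)))) := by
          apply ENNReal.ofReal_le_ofReal
          have hv : (Real.sqrt 2 + j) * second ≤ uj := by
            have hrw : uj = (t0-1+(j:ℝ))*first + (Real.sqrt 2+(j:ℝ))*second
                + (t0 - Real.sqrt 2)*second := by rw [hujdef]; ring
            have h01 : 0 ≤ (t0-1+(j:ℝ)) * first := mul_nonneg (by linarith) hfirstpos.le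
            have h02 : 0 ≤ (t0 - Real.sqrt 2) * second := by
              apply mul_nonneg ?_ hsecondpos.le
              rw [ht0def]; linarith
            linarith [hrw.ge, hrw.le]
          have hvnn : (0:ℝ) ≤ (Real.sqrt 2 + j) * second := by positivity
          have hmono : ((Real.sqrt 2 + (j:ℝ)) * second)^2 ≤ uj^2 := pow_le_pow_left₀ hvnn hv 2
          have hfrac : ((Real.sqrt 2 + (j:ℝ))^2) * Real.log n/(2*r+1)
              ≤ ((n : ℝ) * uj ^ 2) / (2 * Kr * C2 ^ 2 * sig ^ 2) := by
            rw [← hexp_eq (Real.sqrt 2 + (j:ℝ))]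
            gcongr
          have hsq : (2:ℝ) + j ≤ (Real.sqrt 2 + (j:ℝ))^2 := by nlinarith
          have hexp2 : ((2:ℝ)+j) * Real.log n/(2*r+1)
              ≤ ((Real.sqrt 2 + (j:ℝ))^2) * Real.log n/(2*r+1) := by
            gcongr
          have hjlog : (j:ℝ)*(Real.log 2/5) ≤ (j:ℝ)*Real.log n/(2*r+1) := by
            rw [mul_div_assoc]
            apply mul_le_mul_of_nonneg_left ?_ hjnn
            exact div_le_div₀ hlog.le hlog2 h2r1 h2r1le
          have hsplit : ((2:ℝ)+j) * Real.log n/(2*r+1)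
              = 2*Real.log n/(2*r+1) + (j:ℝ)*Real.log n/(2*r+1) := by ring
          -- now combine
          have hexp_le : Real.exp (-((n : ℝ) * uj ^ 2) / (2 * Kr * C2 ^ 2 * sig ^ 2))
              ≤ Real.exp (-(2*Real.log n/(2*r+1))) * Real.exp (-((j:ℝ)*(Real.log 2/5))) := by
            rw [← Real.exp_add]
            apply Real.exp_le_exp.mpr
            rw [neg_div]
            have : -(2*Real.log n/(2*r+1)) + -((j:ℝ)*(Real.log 2/5))
                = -(2*Real.log n/(2*r+1) + (j:ℝ)*(Real.log 2/5)) := by ring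
            rw [this]
            apply neg_le_neg
            calc 2*Real.log n/(2*r+1) + (j:ℝ)*(Real.log 2/5)
                ≤ 2*Real.log n/(2*r+1) + (j:ℝ)*Real.log n/(2*r+1) := by linarith
            _ = ((2:ℝ)+j) * Real.log n/(2*r+1) := by ring
            _ ≤ ((Real.sqrt 2 + (j:ℝ))^2) * Real.log n/(2*r+1) := hexp2
            _ ≤ ((n : ℝ) * uj ^ 2) / (2 * Kr * C2 ^ 2 * sig ^ 2) := hfrac
          have hn2 : ((Kr:ℝ)+1) * Real.exp (-(2*Real.log n/(2*r+1))) ≤ 2*D+1 := by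
            have hge : Real.exp (-(2*Real.log n/(2*r+1))) = (n:ℝ) ^ (-(2/(2*r+1))) := by
              rw [Real.rpow_def_of_pos hnpos]
              congr 1
              ring
            rw [hge]
            calc ((Kr:ℝ)+1) * (n:ℝ) ^ (-(2/(2*r+1)))
                ≤ (2*D+1) * (n:ℝ)^(1/(2*r+1)) * (n:ℝ) ^ (-(2/(2*r+1))) :=
                  mul_le_mul_of_nonneg_right hK1 (by positivity)
            _ = (2*D+1) * (n:ℝ)^(1/(2*r+1) + -(2/(2*r+1))) := by
                  rw [mul_assoc, ← Real.rpow_add hnpos]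
            _ ≤ (2*D+1) * 1 := by
                  apply mul_le_mul_of_nonneg_left ?_ (by linarith)
                  apply Real.rpow_le_one_of_one_le_of_nonpos hn1.le
                  have h0 : (0:ℝ) < 1/(2*r+1) := by positivity
                  have h00 : 2/(2*r+1) = 2*(1/(2*r+1)) := by ring
                  linarith
            _ = 2*D+1 := mul_one _
          calc ((Kr : ℝ) + 1) * Real.exp (-((n : ℝ) * uj ^ 2) / (2 * Kr * C2 ^ 2 * sig ^ 2))
              ≤ ((Kr : ℝ) + 1) * (Real.exp (-(2*Real.log n/(2*r+1)))
                  * Real.exp (-((j:ℝ)*(Real.log 2/5)))) :=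
                mul_le_mul_of_nonneg_left hexp_le (by positivity)
          _ = (((Kr:ℝ)+1) * Real.exp (-(2*Real.log n/(2*r+1))))
                * Real.exp (-((j:ℝ)*(Real.log 2/5))) := by ring
          _ ≤ (2*D+1) * Real.exp (-((j:ℝ)*(Real.log 2/5))) :=
                mul_le_mul_of_nonneg_right hn2 (Real.exp_nonneg _)
    -- integrate
    have hmeas : ∀ j:ℕ, Measurable
        ((A j).indicator (fun _ => ENNReal.ofReal (((j:ℝ)+4)^2))) := fun j =>
      measurable_const.indicator (measurableSet_toMeasurable μ _)
    calc ∫⁻ ω, ENNReal.ofReal ((X ω)^2) ∂μ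
        ≤ ∫⁻ ω, (ENNReal.ofReal (t0^2)
            + ∑' j:ℕ, (A j).indicator (fun _ => ENNReal.ofReal (((j:ℝ)+4)^2)) ω) ∂μ :=
          lintegral_mono hpt
    _ = ENNReal.ofReal (t0^2)
        + ∑' j:ℕ, ENNReal.ofReal (((j:ℝ)+4)^2) * μ (A j) := by
        rw [lintegral_add_left measurable_const, lintegral_const, measure_univ, mul_one,
          lintegral_tsum (fun j => (hmeas j).aemeasurable)]
        congr 1
        apply tsum_congr
        intro j
        rw [lintegral_indicator_const (measurableSet_toMeasurable μ _)]
    _ ≤ ENNReal.ofReal (t0^2)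
        + ∑' j:ℕ, ENNReal.ofReal (1000*(2*D+1))
            * (ENNReal.ofReal ((2:ℝ)^(-((1:ℝ)/10))))^j := by
        apply add_le_add le_rfl
        apply ENNReal.tsum_le_tsum
        intro j
        have hwq : ((2:ℝ)^((1:ℝ)/10))^j * Real.exp (-((j:ℝ)*(Real.log 2/5)))
            = ((2:ℝ)^(-((1:ℝ)/10)))^j := by
          rw [show -((j:ℝ)*(Real.log 2/5)) = (j:ℝ)*(-(Real.log 2/5)) by ring,
            Real.exp_nat_mul, ← mul_pow]
          congr 1
          rw [Real.rpow_def_of_pos (by norm_num : (0:ℝ) < 2),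
            Real.rpow_def_of_pos (by norm_num : (0:ℝ) < 2), ← Real.exp_add]
          congr 1
          ring
        calc ENNReal.ofReal (((j:ℝ)+4)^2) * μ (A j)
            ≤ ENNReal.ofReal (((j:ℝ)+4)^2)
              * ENNReal.ofReal ((2*D+1) * Real.exp (-((j:ℝ)*(Real.log 2/5)))) :=
              mul_le_mul_right (hAj j) _
        _ = ENNReal.ofReal ((((j:ℝ)+4)^2)
              * ((2*D+1) * Real.exp (-((j:ℝ)*(Real.log 2/5))))) :=
              (ENNReal.ofReal_mul (by positivity)).symm
        _ ≤ ENNReal.ofReal ((1000*((2:ℝ)^((1:ℝ)/10))^j)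
              * ((2*D+1) * Real.exp (-((j:ℝ)*(Real.log 2/5))))) := by
              apply ENNReal.ofReal_le_ofReal
              apply mul_le_mul_of_nonneg_right (poly_le_w j) (by positivity)
        _ = ENNReal.ofReal ((1000*(2*D+1)) * ((2:ℝ)^(-((1:ℝ)/10)))^j) := by
              rw [← hwq]
              ring_nf
        _ = ENNReal.ofReal (1000*(2*D+1)) * (ENNReal.ofReal ((2:ℝ)^(-((1:ℝ)/10))))^j := by
              rw [ENNReal.ofReal_mul (by positivity), ENNReal.ofReal_pow (by positivity)]
    _ = ENNReal.ofReal (t0^2) + ENNReal.ofReal (1000*(2*D+1))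
          * (1 - ENNReal.ofReal ((2:ℝ)^(-((1:ℝ)/10))))⁻¹ := by
        rw [ENNReal.tsum_mul_left, ENNReal.tsum_geometric]
    _ ≤ ENNReal.ofReal 6 + ENNReal.ofReal (1000*(2*D+1)) * ENNReal.ofReal 20 := by
        apply add_le_add
        · apply ENNReal.ofReal_le_ofReal
          rw [ht0def]
          nlinarith
        · apply mul_le_mul_right
          have hρle : ENNReal.ofReal ((2:ℝ)^(-((1:ℝ)/10))) ≤ ENNReal.ofReal (19/20) :=
            ENNReal.ofReal_le_ofReal rho_le
          have h3 : (1:ENNReal) - ENNReal.ofReal (19/20) = ENNReal.ofReal (1/20) := by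
            rw [← ENNReal.ofReal_one, ← ENNReal.ofReal_sub _ (by norm_num : (0:ℝ) ≤ 19/20)]
            norm_num
          calc (1 - ENNReal.ofReal ((2:ℝ)^(-((1:ℝ)/10))))⁻¹
              ≤ (ENNReal.ofReal (1/20))⁻¹ := by
                apply ENNReal.inv_le_inv'
                rw [← h3]
                exact tsub_le_tsub_left hρle 1
          _ = ENNReal.ofReal 20 := by
                rw [← ENNReal.ofReal_inv_of_pos (by norm_num : (0:ℝ) < 1/20)]
                norm_num
    _ = ENNReal.ofReal (6 + 20000*(2*D+1)) := by
        rw [← ENNReal.ofReal_mul (by positivity), ← ENNReal.ofReal_add (by norm_num)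
          (by positivity)]
        congr 1
        ring
end
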